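/- For all nonnegative integers m and n and any x, the fully degenerate Bell polynomials satisfy Bel_{n+m,λ}(x) = Σ_{k=0}^m Σ_{l=0}^n (1)_{k,λ} {m brace k}_λ C(n,l) x^k F_{n−l,λ}^{(k)}(−λx, k−mλ) Bel_{l,λ}(x). -/

import Mathlib

open PowerSeries

/-- The degenerate falling factorial `(x)_{n,λ}`. -/
def degFall (lam x : ℝ) (n : ℕ) : ℝ := ∏ i ∈ Finset.range n, (x - i * lam)

/-- The ordinary falling factorial `(x)_k`. -/
def fallF (x : ℝ) (k : ℕ) : ℝ := ∏ i ∈ Finset.range k, (x - i)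

/-- The degenerate exponential `e_λ^y(t) = Σ_{m≥0} (y)_{m,λ} t^m/m!`. -/
noncomputable def degExpP (lam y : ℝ) : PowerSeries ℝ :=
  PowerSeries.mk fun m => degFall lam y m / (Nat.factorial m)

/-- The two-variable degenerate Fubini polynomials of order `k ∈ ℕ`, defined by
`(1/(1 − u(e_λ(t) − 1)))^k e_λ^y(t) = Σ_j F_{j,λ}^{(k)}(u,y) t^j/j!`. -/
noncomputable def degFubiniOrd (lam : ℝ) (k : ℕ) (u y : ℝ) (j : ℕ) : ℝ :=
  (Nat.factorial j : ℝ) * PowerSeries.coeff j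
    (((1 - PowerSeries.C u * (degExpP lam 1 - 1))⁻¹) ^ k * degExpP lam y)

lemma degFall_zero (lam z : ℝ) : degFall lam z 0 = 1 := by simp [degFall]
lemma degFall_succ (lam z : ℝ) (n : ℕ) : degFall lam z (n+1) = degFall lam z n * (z - n*lam) :=
  Finset.prod_range_succ _ _
lemma degFall_succ' (lam z : ℝ) (n : ℕ) : degFall lam z (n+1) = z * degFall lam (z - lam) n := by
  have h := Finset.prod_range_succ' (fun i => z - (i:ℝ)*lam) n
  unfold degFall
  rw [h]
  simp only [Nat.cast_zero, zero_mul, sub_zero]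
  rw [mul_comm]
  congr 1
  refine Finset.prod_congr rfl fun i _ => ?_
  push_cast; ring

lemma degFall_add (lam a b : ℝ) (n : ℕ) : degFall lam (a+b) n
    = ∑ l ∈ Finset.range (n+1), (n.choose l : ℝ) * degFall lam a l * degFall lam b (n-l) := by
  induction n with
  | zero => simp [degFall]
  | succ n ih =>
    rw [degFall_succ, ih, Finset.sum_mul]
    have key : ∀ l ∈ Finset.range (n+1),
        (n.choose l : ℝ) * degFall lam a l * degFall lam b (n-l) * (a + b - n*lam)
        = ((n.choose l : ℝ) * degFall lam a (l+1) * degFall lam b (n-l)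
           + (n.choose l : ℝ) * degFall lam a l * degFall lam b ((n-l)+1)) := by
      intro l hl
      have hln : l ≤ n := Nat.lt_succ_iff.mp (Finset.mem_range.mp hl)
      rw [degFall_succ, degFall_succ]
      have hc : ((n - l : ℕ) : ℝ) = (n : ℝ) - l := by rw [Nat.cast_sub hln]
      rw [hc]; ring
    rw [Finset.sum_congr rfl key, Finset.sum_add_distrib]
    -- RHS target manipulation
    set g : ℕ → ℝ := fun l => (n.choose l : ℝ) * degFall lam a l * degFall lam b (n+1-l) with hg
    have target_eq : ∑ l ∈ Finset.range (n+2), ((n+1).choose l : ℝ) * degFall lam a l * degFall lam b (n+1-l)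
        = (∑ l ∈ Finset.range (n+1), (n.choose l : ℝ) * degFall lam a (l+1) * degFall lam b (n-l))
          + ∑ l ∈ Finset.range (n+2), g l := by
      rw [Finset.sum_range_succ' (fun l => ((n+1).choose l : ℝ) * degFall lam a l * degFall lam b (n+1-l)) (n+1)]
      rw [Finset.sum_range_succ' g (n+1)]
      have step : ∀ l ∈ Finset.range (n+1),
          (((n+1).choose (l+1) : ℝ)) * degFall lam a (l+1) * degFall lam b (n+1-(l+1))
          = (n.choose l : ℝ) * degFall lam a (l+1) * degFall lam b (n-l) + g (l+1) := by
        intro l hl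
        have : (n+1).choose (l+1) = n.choose l + n.choose (l+1) := Nat.choose_succ_succ n l
        rw [this, hg]
        simp only [Nat.succ_sub_succ]
        push_cast; ring
      rw [Finset.sum_congr rfl step, Finset.sum_add_distrib]
      simp [hg, degFall_zero]
      ring
    rw [target_eq]
    congr 1
    · have hgz : g (n+1) = 0 := by simp [hg, Nat.choose_succ_self]
      rw [Finset.sum_range_succ g (n+1), hgz, add_zero]
      refine Finset.sum_congr rfl fun l hl => ?_
      have hln : l ≤ n := Nat.lt_succ_iff.mp (Finset.mem_range.mp hl)
      rw [hg]
      congr 2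
      omega

lemma coeff_degExpP (lam y : ℝ) (p : ℕ) :
    PowerSeries.coeff p (degExpP lam y) = degFall lam y p / p.factorial := by
  simp [degExpP, coeff_mk]

lemma E_mul (lam a b : ℝ) : degExpP lam a * degExpP lam b = degExpP lam (a+b) := by
  ext p
  rw [coeff_mul, Finset.Nat.sum_antidiagonal_eq_sum_range_succ_mk, coeff_degExpP, degFall_add,
    Finset.sum_div]
  refine Finset.sum_congr rfl fun l hl => ?_
  have hlp : l ≤ p := Nat.lt_succ_iff.mp (Finset.mem_range.mp hl)
  rw [coeff_degExpP, coeff_degExpP]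
  have hfac := Nat.choose_mul_factorial_mul_factorial hlp
  have h1 : (l.factorial : ℝ) ≠ 0 := Nat.cast_ne_zero.mpr (Nat.factorial_ne_zero l)
  have h2 : ((p-l).factorial : ℝ) ≠ 0 := Nat.cast_ne_zero.mpr (Nat.factorial_ne_zero _)
  have h3 : (p.factorial : ℝ) ≠ 0 := Nat.cast_ne_zero.mpr (Nat.factorial_ne_zero _)
  have hfacR : (p.choose l : ℝ) * l.factorial * (p-l).factorial = p.factorial := by
    exact_mod_cast congrArg (Nat.cast : ℕ → ℝ) hfac
  field_simp
  linear_combination (- degFall lam a l * degFall lam b (p-l)) * hfacR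

lemma E_zero (lam : ℝ) : degExpP lam 0 = 1 := by
  ext p
  rw [coeff_degExpP]
  cases p with
  | zero => simp [degFall_zero]
  | succ p =>
    rw [degFall_succ']
    simp [coeff_one]

lemma D_E (lam y : ℝ) : d⁄dX ℝ (degExpP lam y) = C y * degExpP lam (y - lam) := by
  ext p
  rw [coeff_derivative, coeff_C_mul, coeff_degExpP, coeff_degExpP, degFall_succ',
    Nat.factorial_succ]
  have h3 : (p.factorial : ℝ) ≠ 0 := Nat.cast_ne_zero.mpr (Nat.factorial_ne_zero _)
  have h4 : ((p:ℝ) + 1) ≠ 0 := by positivity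
  field_simp
  push_cast; ring

lemma constCoeff_Em1 (lam : ℝ) : constantCoeff (degExpP lam 1 - 1) = 0 := by
  rw [map_sub, ← coeff_zero_eq_constantCoeff_apply, coeff_degExpP]
  simp [degFall_zero]

lemma coeff_P_high (lam : ℝ) {p k : ℕ} (h : p < k) :
    PowerSeries.coeff p ((degExpP lam 1 - 1)^k) = 0 := by
  have hX : (X : ℝ⟦X⟧) ∣ (degExpP lam 1 - 1) := X_dvd_iff.mpr (constCoeff_Em1 lam)
  have hXk : (X : ℝ⟦X⟧)^k ∣ (degExpP lam 1 - 1)^k := pow_dvd_pow_of_dvd hX k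
  exact X_pow_dvd_iff.mp hXk p h

lemma E_nat (lam : ℝ) (z : ℕ) : degExpP lam (z : ℝ) = (degExpP lam 1)^z := by
  induction z with
  | zero => simpa using E_zero lam
  | succ z ih =>
    have : ((z+1 : ℕ) : ℝ) = (z : ℝ) + 1 := by push_cast; ring
    rw [this, ← E_mul, ih, pow_succ]

lemma fallF_nat (z k : ℕ) : fallF (z : ℝ) k = (z.descFactorial k : ℝ) := by
  induction k with
  | zero => simp [fallF]
  | succ k ih =>
    have hsucc : fallF (z : ℝ) (k+1) = fallF (z:ℝ) k * ((z:ℝ) - k) := Finset.prod_range_succ _ _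
    rw [hsucc, ih, Nat.descFactorial_succ]
    rcases le_or_gt (k+1) z with h | h
    · have : ((z - k : ℕ) : ℝ) = (z:ℝ) - k := by
        rw [Nat.cast_sub (by omega)]
      rw [Nat.cast_mul, this]; ring
    · have h2 : z - k = 0 := by omega
      rcases eq_or_lt_of_le (by omega : z ≤ k) with hzk | hzk
      · rw [h2, ← hzk]; simp
      · have h1 : z.descFactorial k = 0 := Nat.descFactorial_eq_zero_iff_lt.mpr hzk
        rw [h1, h2]; simp

/-- triangular independence of binomial coefficients -/
lemma choose_indep (N : ℕ) (d : ℕ → ℝ)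
    (h : ∀ z : ℕ, ∑ k ∈ Finset.range N, d k * (z.choose k : ℝ) = 0) :
    ∀ k, k < N → d k = 0 := by
  intro k
  induction k using Nat.strong_induction_on with
  | _ k ih =>
    intro hkN
    have hz := h k
    rw [Finset.sum_eq_single_of_mem k (Finset.mem_range.mpr hkN)] at hz
    · simpa using hz
    · intro j hj hjk
      rcases lt_or_gt_of_ne hjk with hlt | hgt
      · rw [ih j hlt (lt_trans hlt hkN), zero_mul]
      · rw [Nat.choose_eq_zero_of_lt hgt]; simp

/-- independence of the falling factorials -/
lemma fallF_indep (N : ℕ) (a : ℕ → ℝ)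
    (h : ∀ z : ℝ, ∑ k ∈ Finset.range N, a k * fallF z k = 0) :
    ∀ k, k < N → a k = 0 := by
  intro k
  induction k using Nat.strong_induction_on with
  | _ k ih =>
    intro hkN
    have hz := h (k : ℝ)
    rw [Finset.sum_eq_single_of_mem k (Finset.mem_range.mpr hkN)] at hz
    · have : fallF (k:ℝ) k = (k.factorial : ℝ) := by
        rw [fallF_nat, Nat.descFactorial_self]
      rw [this] at hz
      have hf : (k.factorial : ℝ) ≠ 0 := Nat.cast_ne_zero.mpr (Nat.factorial_ne_zero _)
      exact (mul_eq_zero.mp hz).resolve_right hf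
    · intro j hj hjk
      rcases lt_or_gt_of_ne hjk with hlt | hgt
      · rw [ih j hlt (lt_trans hlt hkN), zero_mul]
      · rw [fallF_nat, Nat.descFactorial_eq_zero_iff_lt.mpr hgt]; simp

section withS
variable (lam x : ℝ) (S : ℕ → ℕ → ℝ)

lemma S_zero (hS : ∀ (n : ℕ) (z : ℝ),
      degFall lam z n = ∑ k ∈ Finset.range (n + 1), S n k * fallF z k) : S 0 0 = 1 := by
  have h := hS 0 0
  simp [degFall_zero, fallF] at h
  linarith [h]
  
lemma coeff_E1pow (lam : ℝ) (z p : ℕ) :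
    PowerSeries.coeff p ((degExpP lam 1)^z)
      = ∑ j ∈ Finset.range (z+1), PowerSeries.coeff p ((degExpP lam 1 - 1)^j) * (z.choose j : ℝ) := by
  have hE : (degExpP lam 1)^z = ((degExpP lam 1 - 1) + 1)^z := by ring_nf
  rw [hE, add_pow, map_sum]
  refine Finset.sum_congr rfl fun j hj => ?_
  rw [one_pow, ← map_natCast (C (R := ℝ)) (z.choose j), mul_one, coeff_mul_C]

lemma coeff_P (hS : ∀ (n : ℕ) (z : ℝ),
      degFall lam z n = ∑ k ∈ Finset.range (n + 1), S n k * fallF z k)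
    (p k : ℕ) (hk : k ≤ p) :
    PowerSeries.coeff p ((degExpP lam 1 - 1)^k)
      = S p k * k.factorial / p.factorial := by
  have hp : (p.factorial : ℝ) ≠ 0 := Nat.cast_ne_zero.mpr (Nat.factorial_ne_zero _)
  have key : ∀ z : ℕ, ∑ j ∈ Finset.range (p+1),
      (S p j * j.factorial / p.factorial
        - PowerSeries.coeff p ((degExpP lam 1 - 1)^j)) * (z.choose j : ℝ) = 0 := by
    intro z
    have hA : ∑ j ∈ Finset.range (p+1), (S p j * j.factorial / p.factorial) * (z.choose j : ℝ)
        = degFall lam (z:ℝ) p / p.factorial := by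
      rw [hS p (z:ℝ), Finset.sum_div]
      refine Finset.sum_congr rfl fun j hj => ?_
      rw [fallF_nat, Nat.descFactorial_eq_factorial_mul_choose]
      push_cast
      ring
    have hB : ∑ j ∈ Finset.range (p+1),
        PowerSeries.coeff p ((degExpP lam 1 - 1)^j) * (z.choose j : ℝ)
        = degFall lam (z:ℝ) p / p.factorial := by
      have h1 : degFall lam (z:ℝ) p / p.factorial
          = ∑ j ∈ Finset.range (z+1),
              PowerSeries.coeff p ((degExpP lam 1 - 1)^j) * (z.choose j : ℝ) := by
        rw [← coeff_E1pow, ← E_nat, coeff_degExpP]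
      rw [h1]
      have hsub1 : Finset.range (z+1) ⊆ Finset.range (p+z+2) := by
        intro a ha; simp at ha ⊢; omega
      have hsub2 : Finset.range (p+1) ⊆ Finset.range (p+z+2) := by
        intro a ha; simp at ha ⊢; omega
      rw [Finset.sum_subset hsub1, Finset.sum_subset hsub2]
      · intro a _ ha
        have : p < a := by simp at ha; omega
        rw [coeff_P_high lam this, zero_mul]
      · intro a _ ha
        have : z < a := by simp at ha; omega
        rw [Nat.choose_eq_zero_of_lt this, Nat.cast_zero, mul_zero]
    calc ∑ j ∈ Finset.range (p+1),
        (S p j * j.factorial / p.factorial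
          - PowerSeries.coeff p ((degExpP lam 1 - 1)^j)) * (z.choose j : ℝ)
        = ∑ j ∈ Finset.range (p+1), ((S p j * j.factorial / p.factorial) * (z.choose j : ℝ)
            - PowerSeries.coeff p ((degExpP lam 1 - 1)^j) * (z.choose j : ℝ)) := by
          refine Finset.sum_congr rfl fun j hj => by ring
      _ = 0 := by rw [Finset.sum_sub_distrib, hA, hB, sub_self]
  have := choose_indep (p+1) _ key k (by omega)
  linarith [this]

lemma S_rec (hS : ∀ (n : ℕ) (z : ℝ),
      degFall lam z n = ∑ k ∈ Finset.range (n + 1), S n k * fallF z k)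
    (m : ℕ) : ∀ k ≤ m+1, S (m+1) k
      = (if k = 0 then 0 else S m (k-1))
        + (if k ≤ m then ((k:ℝ) - m*lam) * S m k else 0) := by
  set T : ℕ → ℝ := fun k => (if k = 0 then 0 else S m (k-1))
        + (if k ≤ m then ((k:ℝ) - m*lam) * S m k else 0) with hT
  have key : ∀ z : ℝ, ∑ k ∈ Finset.range (m+2), (S (m+1) k - T k) * fallF z k = 0 := by
    intro z
    have e0 : ∑ k ∈ Finset.range (m+2), S (m+1) k * fallF z k = degFall lam z (m+1) :=
      (hS (m+1) z).symm
    have e1 : ∑ k ∈ Finset.range (m+2), T k * fallF z k = degFall lam z (m+1) := by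
      have split : ∑ k ∈ Finset.range (m+2), T k * fallF z k
          = (∑ k ∈ Finset.range (m+2), (if k = 0 then (0:ℝ) else S m (k-1)) * fallF z k)
            + ∑ k ∈ Finset.range (m+2), (if k ≤ m then ((k:ℝ) - m*lam) * S m k else 0) * fallF z k := by
        rw [← Finset.sum_add_distrib]
        refine Finset.sum_congr rfl fun k hk => by rw [hT]; ring
      have part1 : ∑ k ∈ Finset.range (m+2), (if k = 0 then (0:ℝ) else S m (k-1)) * fallF z k
          = ∑ k ∈ Finset.range (m+1), S m k * fallF z (k+1) := by
        rw [Finset.sum_range_succ' (fun k => (if k = 0 then (0:ℝ) else S m (k-1)) * fallF z k) (m+1)]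
        simp
      have part2 : ∑ k ∈ Finset.range (m+2), (if k ≤ m then ((k:ℝ) - m*lam) * S m k else 0) * fallF z k
          = ∑ k ∈ Finset.range (m+1), ((k:ℝ) - m*lam) * S m k * fallF z k := by
        rw [Finset.sum_range_succ]
        simp only [Nat.lt_irrefl, if_neg (by omega : ¬ (m+1 ≤ m)), zero_mul, add_zero]
        refine Finset.sum_congr rfl fun k hk => ?_
        have : k ≤ m := Nat.lt_succ_iff.mp (Finset.mem_range.mp hk)
        rw [if_pos this]
      rw [split, part1, part2, degFall_succ, hS m z, Finset.sum_mul, ← Finset.sum_add_distrib]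
      refine Finset.sum_congr rfl fun k hk => ?_
      have hf : fallF z (k+1) = fallF z k * (z - k) := Finset.prod_range_succ _ _
      rw [hf]; ring
    calc ∑ k ∈ Finset.range (m+2), (S (m+1) k - T k) * fallF z k
        = (∑ k ∈ Finset.range (m+2), S (m+1) k * fallF z k)
          - ∑ k ∈ Finset.range (m+2), T k * fallF z k := by
          rw [← Finset.sum_sub_distrib]
          exact Finset.sum_congr rfl fun k hk => by ring
      _ = 0 := by rw [e0, e1, sub_self]
  intro k hk
  have h0 := fallF_indep (m+2) _ key k (by omega)
  have h2 : S (m+1) k = T k := by linarith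
  rw [h2, hT]

end withS

noncomputable def Hser (lam x : ℝ) : PowerSeries ℝ := 1 - C (-lam*x) * (degExpP lam 1 - 1)
noncomputable def Gser (lam x : ℝ) : PowerSeries ℝ := (Hser lam x)⁻¹
noncomputable def Bpart (lam x : ℝ) (N : ℕ) : PowerSeries ℝ :=
  ∑ k ∈ Finset.range N, C (degFall lam 1 k * x^k / k.factorial) * (degExpP lam 1 - 1)^k

lemma HG (lam x : ℝ) : Hser lam x * Gser lam x = 1 := by
  refine PowerSeries.mul_inv_cancel _ ?_
  rw [Hser, map_sub, map_mul, constCoeff_Em1, map_one, mul_zero, sub_zero]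
  norm_num


lemma D_Em1 (lam : ℝ) : d⁄dX ℝ (degExpP lam 1 - 1) = degExpP lam (1-lam) := by
  rw [map_sub, Derivation.map_one_eq_zero, sub_zero, D_E, map_one, one_mul]

lemma cast_ps (N : ℕ) : ((N : ℝ⟦X⟧)) = C (N : ℝ) := by
  rw [map_natCast (C (R := ℝ)) N]

lemma D_P (lam : ℝ) (N : ℕ) : d⁄dX ℝ ((degExpP lam 1 - 1)^(N+1))
    = C ((N:ℝ)+1) * degExpP lam (1-lam) * (degExpP lam 1 - 1)^N := by
  have h := Derivation.leibniz_pow (d⁄dX ℝ) (a := degExpP lam 1 - 1) (N+1)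
  rw [h, D_Em1, nsmul_eq_mul, smul_eq_mul, Nat.add_sub_cancel, cast_ps]
  have : ((N+1 : ℕ) : ℝ) = (N:ℝ)+1 := by push_cast; ring
  rw [this]
  ring

lemma Hpart (lam x : ℝ) (N : ℕ) :
    Hser lam x * (d⁄dX ℝ (Bpart lam x (N+1)))
      = C x * degExpP lam (1-lam) * Bpart lam x (N+1)
        + C (degFall lam 1 N * x^(N+1) * (N*lam - 1) / N.factorial)
          * degExpP lam (1-lam) * (degExpP lam 1 - 1)^N := by
  induction N with
  | zero =>
    have : Bpart lam x 1 = 1 := by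
      simp [Bpart, degFall_zero]
    rw [this]
    simp [degFall_zero]
  | succ N ih =>
    have hB : Bpart lam x (N+2) = Bpart lam x (N+1)
        + C (degFall lam 1 (N+1) * x^(N+1) / (N+1).factorial) * (degExpP lam 1 - 1)^(N+1) :=
      Finset.sum_range_succ _ _
    rw [hB, map_add, Derivation.leibniz, smul_eq_mul, smul_eq_mul, derivative_C, mul_zero, add_zero,
      D_P, mul_add, ih]
    have hN : (N.factorial : ℝ) ≠ 0 := Nat.cast_ne_zero.mpr (Nat.factorial_ne_zero _)
    have hN1 : ((N:ℝ)+1) ≠ 0 := by positivity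
    have hfacs : ((N+1).factorial : ℝ) = ((N:ℝ)+1) * N.factorial := by
      rw [Nat.factorial_succ]; push_cast; ring
    have h1 : C (degFall lam 1 (N+1) * x^(N+1) / (N+1).factorial) * C ((N:ℝ)+1)
        + C (degFall lam 1 N * x^(N+1) * (N*lam - 1) / N.factorial) = 0 := by
      rw [← map_mul, ← map_add]
      have : degFall lam 1 (N+1) * x^(N+1) / (N+1).factorial * ((N:ℝ)+1)
          + degFall lam 1 N * x^(N+1) * (N*lam - 1) / N.factorial = 0 := by
        rw [degFall_succ, hfacs]
        field_simp
        ring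
      rw [this, map_zero]
    have h2 : C (degFall lam 1 (N+1) * x^(N+1) / (N+1).factorial) * C ((N:ℝ)+1) * C (-lam*x)
        = - (C x * C (degFall lam 1 (N+1) * x^(N+1) / (N+1).factorial)
          + C (degFall lam 1 (N+1) * x^(N+1+1) * ((N:ℝ)*lam + lam - 1) / (N+1).factorial)) := by
      rw [← map_mul, ← map_mul, ← map_mul, ← map_add, ← map_neg]
      congr 1
      ring
    have hcast : ((N+1 : ℕ) : ℝ) = (N:ℝ)+1 := by push_cast; ring
    rw [Hser] at *
    set E := degExpP lam (1-lam)
    set W := degExpP lam 1 - 1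
    set Bp := Bpart lam x (N+1)
    have hWpow : W^(N+1) = W^N * W := pow_succ W N
    have hgoalC : degFall lam 1 (N+1) * x^(N+1+1) * (((N+1:ℕ):ℝ)*lam - 1) / (N+1).factorial
        = degFall lam 1 (N+1) * x^(N+1+1) * ((N:ℝ)*lam + lam - 1) / (N+1).factorial := by
      rw [hcast]; ring
    rw [hWpow, hgoalC]
    linear_combination (E * W^N) * h1 - (E * W^N * W) * h2

noncomputable def Bser (lam x : ℝ) (S : ℕ → ℕ → ℝ) : PowerSeries ℝ :=
  PowerSeries.mk fun p => (∑ j ∈ Finset.range (p+1), S p j * degFall lam 1 j * x^j) / p.factorial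

lemma coeff_mul_congr (p : ℕ) (h f g : PowerSeries ℝ)
    (hfg : ∀ j, j ≤ p → PowerSeries.coeff j f = PowerSeries.coeff j g) :
    PowerSeries.coeff p (h * f) = PowerSeries.coeff p (h * g) := by
  rw [coeff_mul, coeff_mul]
  refine Finset.sum_congr rfl fun ij hij => ?_
  have := Finset.HasAntidiagonal.mem_antidiagonal.mp hij
  rw [hfg ij.2 (by omega)]

section withS2
variable (lam x : ℝ) (S : ℕ → ℕ → ℝ)
variable (hS : ∀ (n : ℕ) (z : ℝ),
      degFall lam z n = ∑ k ∈ Finset.range (n + 1), S n k * fallF z k)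

lemma coeff_Bser (p : ℕ) : PowerSeries.coeff p (Bser lam x S)
    = (∑ j ∈ Finset.range (p+1), S p j * degFall lam 1 j * x^j) / p.factorial := by
  simp [Bser, coeff_mk]

include hS in
lemma coeff_Bser_Bpart (p N : ℕ) (h : p < N) :
    PowerSeries.coeff p (Bser lam x S) = PowerSeries.coeff p (Bpart lam x N) := by
  rw [Bpart, map_sum]
  have htrim : ∑ k ∈ Finset.range N,
      PowerSeries.coeff p (C (degFall lam 1 k * x^k / k.factorial) * (degExpP lam 1 - 1)^k)
      = ∑ k ∈ Finset.range (p+1),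
        PowerSeries.coeff p (C (degFall lam 1 k * x^k / k.factorial) * (degExpP lam 1 - 1)^k) := by
    symm
    refine Finset.sum_subset (by intro a ha; simp at ha ⊢; omega) ?_
    intro a _ ha
    have hp : p < a := by simp at ha; omega
    rw [coeff_C_mul, coeff_P_high lam hp, mul_zero]
  rw [htrim, coeff_Bser]
  rw [Finset.sum_div]
  refine Finset.sum_congr rfl fun k hk => ?_
  have hkp : k ≤ p := Nat.lt_succ_iff.mp (Finset.mem_range.mp hk)
  rw [coeff_C_mul, coeff_P lam S hS p k hkp]
  have h1 : (k.factorial : ℝ) ≠ 0 := Nat.cast_ne_zero.mpr (Nat.factorial_ne_zero _)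
  have h2 : (p.factorial : ℝ) ≠ 0 := Nat.cast_ne_zero.mpr (Nat.factorial_ne_zero _)
  field_simp

include hS in
lemma ODE0 : Hser lam x * (d⁄dX ℝ (Bser lam x S))
    = C x * degExpP lam (1-lam) * Bser lam x S := by
  ext p
  have hDcoeff : ∀ j, j ≤ p → PowerSeries.coeff j (d⁄dX ℝ (Bser lam x S))
      = PowerSeries.coeff j (d⁄dX ℝ (Bpart lam x (p+2))) := by
    intro j hj
    rw [coeff_derivative, coeff_derivative, coeff_Bser_Bpart lam x S hS (j+1) (p+2) (by omega)]
  rw [coeff_mul_congr p _ _ _ hDcoeff, Hpart lam x (p+1), map_add]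
  have hzero : PowerSeries.coeff p
      (C (degFall lam 1 (p+1) * x^(p+1+1) * ((p+1:ℕ)*lam - 1) / (p+1).factorial)
        * degExpP lam (1-lam) * (degExpP lam 1 - 1)^(p+1)) = 0 := by
    have hX : (X : ℝ⟦X⟧) ∣ (degExpP lam 1 - 1) := X_dvd_iff.mpr (constCoeff_Em1 lam)
    have hXk : (X : ℝ⟦X⟧)^(p+1) ∣ (degExpP lam 1 - 1)^(p+1) := pow_dvd_pow_of_dvd hX _
    have : (X : ℝ⟦X⟧)^(p+1) ∣ C (degFall lam 1 (p+1) * x^(p+1+1) * ((p+1:ℕ)*lam - 1) / (p+1).factorial)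
        * degExpP lam (1-lam) * (degExpP lam 1 - 1)^(p+1) := Dvd.dvd.mul_left hXk _
    exact X_pow_dvd_iff.mp this p (by omega)
  rw [hzero, add_zero]
  rw [mul_assoc, mul_assoc, coeff_mul_congr p _ _ _ ?h2]
  case h2 =>
    intro j hj
    exact coeff_mul_congr j _ _ _ (fun i hi => (coeff_Bser_Bpart lam x S hS i (p+2) (by omega)).symm)

include hS in
lemma D_Bser : d⁄dX ℝ (Bser lam x S)
    = C x * degExpP lam (1-lam) * Gser lam x * Bser lam x S := by
  have hGH : Gser lam x * Hser lam x = 1 := by rw [mul_comm]; exact HG lam x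
  calc d⁄dX ℝ (Bser lam x S) = (Gser lam x * Hser lam x) * d⁄dX ℝ (Bser lam x S) := by
        rw [hGH, one_mul]
    _ = Gser lam x * (Hser lam x * d⁄dX ℝ (Bser lam x S)) := by ring
    _ = Gser lam x * (C x * degExpP lam (1-lam) * Bser lam x S) := by rw [ODE0 lam x S hS]
    _ = C x * degExpP lam (1-lam) * Gser lam x * Bser lam x S := by ring

end withS2

lemma D_H (lam x : ℝ) : d⁄dX ℝ (Hser lam x) = C (lam*x) * degExpP lam (1-lam) := by
  rw [Hser, map_sub, Derivation.map_one_eq_zero, Derivation.leibniz, derivative_C, smul_eq_mul,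
    smul_eq_mul, mul_zero, add_zero, D_Em1, zero_sub, ← neg_mul, ← map_neg]
  congr 1
  ring

lemma D_G (lam x : ℝ) : d⁄dX ℝ (Gser lam x)
    = C (-(lam*x)) * degExpP lam (1-lam) * (Gser lam x)^2 := by
  have hHG := HG lam x
  have h0 := congrArg (d⁄dX ℝ) hHG
  rw [Derivation.leibniz, Derivation.map_one_eq_zero, smul_eq_mul, smul_eq_mul, D_H] at h0
  have hGH : Gser lam x * Hser lam x = 1 := by rw [mul_comm]; exact HG lam x
  calc d⁄dX ℝ (Gser lam x) = (Gser lam x * Hser lam x) * d⁄dX ℝ (Gser lam x) := by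
        rw [hGH, one_mul]
    _ = Gser lam x * (Hser lam x * d⁄dX ℝ (Gser lam x)) := by ring
    _ = Gser lam x * (- (Gser lam x * (C (lam*x) * degExpP lam (1-lam)))) := by
        rw [show Hser lam x * d⁄dX ℝ (Gser lam x)
            = - (Gser lam x * (C (lam*x) * degExpP lam (1-lam))) by linear_combination h0 ]
    _ = C (-(lam*x)) * degExpP lam (1-lam) * (Gser lam x)^2 := by
        rw [map_neg]; ring

lemma D_Gpow (lam x : ℝ) (k : ℕ) : d⁄dX ℝ ((Gser lam x)^k)
    = C ((k:ℝ) * (-(lam*x))) * degExpP lam (1-lam) * (Gser lam x)^(k+1) := by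
  cases k with
  | zero => simp [Derivation.map_one_eq_zero]
  | succ k =>
    have h := Derivation.leibniz_pow (d⁄dX ℝ) (a := Gser lam x) (k+1)
    rw [h, D_G, nsmul_eq_mul, smul_eq_mul, Nat.add_sub_cancel, cast_ps]
    have hpow : (Gser lam x)^k * (Gser lam x)^2 = (Gser lam x)^(k+1+1) := by
      rw [← pow_add]
    have hc : ((k+1:ℕ):ℝ) = (k:ℝ)+1 := by push_cast; ring
    rw [hc]
    calc C ((k:ℝ)+1) * ((Gser lam x)^k * (C (-(lam*x)) * degExpP lam (1-lam) * (Gser lam x)^2))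
        = C ((k:ℝ)+1) * C (-(lam*x)) * degExpP lam (1-lam) * ((Gser lam x)^k * (Gser lam x)^2) := by
          ring
      _ = C (((k:ℝ)+1) * (-(lam*x))) * degExpP lam (1-lam) * (Gser lam x)^(k+1+1) := by
          rw [hpow, ← map_mul]

section star
variable (lam x : ℝ) (S : ℕ → ℕ → ℝ)
variable (hS : ∀ (n : ℕ) (z : ℝ),
      degFall lam z n = ∑ k ∈ Finset.range (n + 1), S n k * fallF z k)

include hS in
lemma D_term (m k : ℕ) :
    d⁄dX ℝ ((Gser lam x)^k * degExpP lam ((k:ℝ) - m*lam) * Bser lam x S)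
      = C ((k:ℝ) - m*lam) * ((Gser lam x)^k * degExpP lam ((k:ℝ) - ((m:ℝ)+1)*lam)) * Bser lam x S
        + C (x*(1 - k*lam)) * ((Gser lam x)^(k+1) * degExpP lam (((k:ℝ)+1) - ((m:ℝ)+1)*lam))
          * Bser lam x S := by
  rw [Derivation.leibniz, Derivation.leibniz, smul_eq_mul, smul_eq_mul, smul_eq_mul, smul_eq_mul,
    D_Gpow, D_E, D_Bser lam x S hS]
  have e1 : degExpP lam (1-lam) * degExpP lam ((k:ℝ) - m*lam)
      = degExpP lam (((k:ℝ)+1) - ((m:ℝ)+1)*lam) := by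
    rw [E_mul]
    congr 1
    ring
  have e2 : ((k:ℝ) - m*lam) - lam = (k:ℝ) - ((m:ℝ)+1)*lam := by ring
  have e3 : (Gser lam x)^k * (Gser lam x) = (Gser lam x)^(k+1) := by rw [pow_succ]
  have c1 : C ((k:ℝ) * (-(lam*x))) + C x = C (x*(1 - k*lam)) := by
    rw [← map_add]; congr 1; ring
  rw [e2]
  calc (Gser lam x)^k * degExpP lam ((k:ℝ) - m*lam)
          * (C x * degExpP lam (1-lam) * Gser lam x * Bser lam x S)
        + Bser lam x S * ((Gser lam x)^k * (C ((k:ℝ) - m*lam) * degExpP lam ((k:ℝ) - ((m:ℝ)+1)*lam))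
          + degExpP lam ((k:ℝ) - m*lam)
            * (C ((k:ℝ) * (-(lam*x))) * degExpP lam (1-lam) * (Gser lam x)^(k+1)))
      = C ((k:ℝ) - m*lam) * ((Gser lam x)^k * degExpP lam ((k:ℝ) - ((m:ℝ)+1)*lam)) * Bser lam x S
        + (C ((k:ℝ) * (-(lam*x))) + C x)
          * ((degExpP lam (1-lam) * degExpP lam ((k:ℝ) - m*lam)) * ((Gser lam x)^k * Gser lam x))
          * Bser lam x S := by
        ring
    _ = C ((k:ℝ) - m*lam) * ((Gser lam x)^k * degExpP lam ((k:ℝ) - ((m:ℝ)+1)*lam)) * Bser lam x S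
        + C (x*(1 - k*lam)) * ((Gser lam x)^(k+1) * degExpP lam (((k:ℝ)+1) - ((m:ℝ)+1)*lam))
          * Bser lam x S := by
        rw [c1, e1, e3]
        ring

include hS in
lemma star (m : ℕ) :
    (⇑(d⁄dX ℝ))^[m] (Bser lam x S)
      = ∑ k ∈ Finset.range (m+1), C (degFall lam 1 k * S m k * x^k)
          * ((Gser lam x)^k * degExpP lam ((k:ℝ) - m*lam)) * Bser lam x S := by
  induction m with
  | zero =>
    have hS00 : S 0 0 = 1 := S_zero lam S hS
    simp only [Function.iterate_zero, id_eq, zero_add, Finset.sum_range_one, pow_zero,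
      hS00, degFall_zero, Nat.cast_zero, zero_mul, sub_zero, E_zero, mul_one, one_mul, map_one]
  | succ m ih =>
    rw [Function.iterate_succ_apply', ih, map_sum]
    have hterm : ∀ k ∈ Finset.range (m+1),
        d⁄dX ℝ (C (degFall lam 1 k * S m k * x^k)
            * ((Gser lam x)^k * degExpP lam ((k:ℝ) - m*lam)) * Bser lam x S)
        = C (degFall lam 1 k * (((k:ℝ) - m*lam) * S m k) * x^k)
            * ((Gser lam x)^k * degExpP lam ((k:ℝ) - ((m:ℝ)+1)*lam)) * Bser lam x S
          + C (degFall lam 1 (k+1) * S m k * x^(k+1))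
            * ((Gser lam x)^(k+1) * degExpP lam (((k:ℝ)+1) - ((m:ℝ)+1)*lam)) * Bser lam x S := by
      intro k hk
      rw [mul_assoc, Derivation.leibniz, derivative_C, smul_eq_mul, smul_eq_mul, mul_zero, add_zero,
        D_term lam x S hS m k]
      have c2 : C (degFall lam 1 k * S m k * x^k) * C ((k:ℝ) - m*lam)
          = C (degFall lam 1 k * (((k:ℝ) - m*lam) * S m k) * x^k) := by
        rw [← map_mul]; congr 1; ring
      have c3 : C (degFall lam 1 k * S m k * x^k) * C (x*(1 - k*lam))
          = C (degFall lam 1 (k+1) * S m k * x^(k+1)) := by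
        rw [← map_mul]; congr 1
        rw [degFall_succ]
        ring
      calc C (degFall lam 1 k * S m k * x^k)
            * (C ((k:ℝ) - m*lam) * ((Gser lam x)^k * degExpP lam ((k:ℝ) - ((m:ℝ)+1)*lam)) * Bser lam x S
              + C (x*(1 - k*lam)) * ((Gser lam x)^(k+1) * degExpP lam (((k:ℝ)+1) - ((m:ℝ)+1)*lam))
                * Bser lam x S)
          = (C (degFall lam 1 k * S m k * x^k) * C ((k:ℝ) - m*lam))
              * ((Gser lam x)^k * degExpP lam ((k:ℝ) - ((m:ℝ)+1)*lam)) * Bser lam x S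
            + (C (degFall lam 1 k * S m k * x^k) * C (x*(1 - k*lam)))
              * ((Gser lam x)^(k+1) * degExpP lam (((k:ℝ)+1) - ((m:ℝ)+1)*lam)) * Bser lam x S := by
            ring
        _ = _ := by rw [c2, c3]
    rw [Finset.sum_congr rfl hterm, Finset.sum_add_distrib]
    -- now transform the RHS target
    have hrec := S_rec lam S hS m
    have htarget : ∀ k ∈ Finset.range (m+2),
        C (degFall lam 1 k * S (m+1) k * x^k)
            * ((Gser lam x)^k * degExpP lam ((k:ℝ) - (m+1:ℕ)*lam)) * Bser lam x S
        = C (degFall lam 1 k * (if k = 0 then 0 else S m (k-1)) * x^k)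
            * ((Gser lam x)^k * degExpP lam ((k:ℝ) - ((m:ℝ)+1)*lam)) * Bser lam x S
          + C (degFall lam 1 k * (if k ≤ m then ((k:ℝ) - m*lam) * S m k else 0) * x^k)
            * ((Gser lam x)^k * degExpP lam ((k:ℝ) - ((m:ℝ)+1)*lam)) * Bser lam x S := by
      intro k hk
      have hkm : k ≤ m+1 := Nat.lt_succ_iff.mp (Finset.mem_range.mp hk)
      have hcast : ((m+1:ℕ):ℝ) = (m:ℝ)+1 := by push_cast; ring
      rw [hrec k hkm, hcast, ← add_mul, ← add_mul, ← map_add]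
      congr 2
      · congr 1
        ring
    rw [Finset.sum_congr rfl htarget, Finset.sum_add_distrib, add_comm]
    congr 1
    · -- shifted part
      rw [Finset.sum_range_succ' (fun k => C (degFall lam 1 k * (if k = 0 then (0:ℝ) else S m (k-1)) * x^k)
            * ((Gser lam x)^k * degExpP lam ((k:ℝ) - ((m:ℝ)+1)*lam)) * Bser lam x S) (m+1)]
      simp only [if_pos rfl, eq_self_iff_true, if_true, mul_zero, zero_mul, map_zero, add_zero,
        Nat.add_sub_cancel, if_neg (Nat.succ_ne_zero _)]
      refine Finset.sum_congr rfl fun k hk => ?_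
      have hcast2 : ((k+1:ℕ):ℝ) = (k:ℝ)+1 := by push_cast; ring
      rw [hcast2]
    · -- direct part
      rw [Finset.sum_range_succ (fun k => C ((degFall lam 1 k * if k ≤ m then ((k:ℝ) - (m:ℝ)*lam) * S m k else 0) * x^k)
            * ((Gser lam x)^k * degExpP lam ((k:ℝ) - ((m:ℝ)+1)*lam)) * Bser lam x S) (m+1)]
      have hif : (if m + 1 ≤ m then (((m+1:ℕ):ℝ) - (m:ℝ)*lam) * S m (m+1) else (0:ℝ)) = 0 :=
        if_neg (by omega)
      rw [hif]
      simp only [mul_zero, zero_mul, map_zero, add_zero]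
      refine Finset.sum_congr rfl fun k hk => ?_
      rw [if_pos (Nat.lt_succ_iff.mp (Finset.mem_range.mp hk))]

end star

lemma coeff_iter (f : PowerSeries ℝ) (m n : ℕ) :
    PowerSeries.coeff n ((⇑(d⁄dX ℝ))^[m] f)
      = ((n+m).factorial / n.factorial : ℝ) * PowerSeries.coeff (n+m) f := by
  induction m generalizing f n with
  | zero =>
    simp [div_self (Nat.cast_ne_zero.mpr (Nat.factorial_ne_zero n) : ((n.factorial:ℝ)) ≠ 0)]
  | succ m ih =>
    rw [Function.iterate_succ_apply, ih (d⁄dX ℝ f) n, coeff_derivative]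
    have h1 : n + m + 1 = n + (m+1) := by omega
    have h2 : ((n+(m+1)).factorial : ℝ) = (n+m).factorial * ((n:ℝ)+m+1) := by
      rw [show n+(m+1) = (n+m)+1 by omega, Nat.factorial_succ]
      push_cast; ring
    rw [h1, h2]
    have h3 : (n.factorial : ℝ) ≠ 0 := Nat.cast_ne_zero.mpr (Nat.factorial_ne_zero _)
    field_simp
    push_cast; ring


/-- Spivey-type recurrence for the fully degenerate Bell polynomials
`Bel_{n,λ}(x) = Σ_{k=0}^n {n brace k}_λ (1)_{k,λ} x^k`:
`Bel_{n+m,λ}(x) = Σ_{k=0}^m Σ_{l=0}^n (1)_{k,λ} {m brace k}_λ C(n,l) x^k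
F_{n−l,λ}^{(k)}(−λx, k−mλ) Bel_{l,λ}(x)`, where `S n k = {n brace k}_λ` is
defined by `(x)_{n,λ} = Σ_k S n k (x)_k`. -/
theorem stmt10 (lam x : ℝ) (S : ℕ → ℕ → ℝ)
    (hS : ∀ (n : ℕ) (z : ℝ),
      degFall lam z n = ∑ k ∈ Finset.range (n + 1), S n k * fallF z k)
    (n m : ℕ) :
    (∑ j ∈ Finset.range (n + m + 1), S (n + m) j * degFall lam 1 j * x ^ j) =
      ∑ k ∈ Finset.range (m + 1), ∑ l ∈ Finset.range (n + 1),
        degFall lam 1 k * S m k * (n.choose l : ℝ) * x ^ k *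
          degFubiniOrd lam k (-lam * x) ((k : ℝ) - m * lam) (n - l) *
          (∑ j ∈ Finset.range (l + 1), S l j * degFall lam 1 j * x ^ j) := by
  have hfac : ∀ p : ℕ, ((p.factorial : ℝ)) ≠ 0 :=
    fun p => Nat.cast_ne_zero.mpr (Nat.factorial_ne_zero _)
  set B := Bser lam x S with hB
  have hBel : ∀ p : ℕ, (∑ j ∈ Finset.range (p + 1), S p j * degFall lam 1 j * x ^ j)
      = (p.factorial : ℝ) * PowerSeries.coeff p B := by
    intro p
    rw [hB, coeff_Bser]
    field_simp
  have key := congrArg (PowerSeries.coeff n) (star lam x S hS m)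
  rw [coeff_iter, map_sum] at key
  have h1 : ∀ k ∈ Finset.range (m+1),
      PowerSeries.coeff n (C (degFall lam 1 k * S m k * x^k)
          * ((Gser lam x)^k * degExpP lam ((k:ℝ) - m*lam)) * B)
      = (degFall lam 1 k * S m k * x^k) * ∑ l ∈ Finset.range (n+1),
          PowerSeries.coeff (n-l) ((Gser lam x)^k * degExpP lam ((k:ℝ) - m*lam))
            * PowerSeries.coeff l B := by
    intro k _
    rw [mul_assoc, coeff_C_mul, coeff_mul, Finset.Nat.sum_antidiagonal_eq_sum_range_succ_mk]
    congr 1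
    rw [← Finset.sum_range_reflect]
    refine Finset.sum_congr rfl fun l hl => ?_
    have hln : l ≤ n := Nat.lt_succ_iff.mp (Finset.mem_range.mp hl)
    have e1 : n + 1 - 1 - l = n - l := by omega
    have e2 : n - (n - l) = l := by omega
    rw [e1, e2]
  rw [Finset.sum_congr rfl h1] at key
  -- key : ((n+m)!/n!) * coeff (n+m) B = Σ_k a_k * Σ_l ...
  rw [hBel (n+m)]
  have main : ((n+m).factorial : ℝ) * PowerSeries.coeff (n+m) B
      = (n.factorial : ℝ) * (((n+m).factorial / n.factorial : ℝ) * PowerSeries.coeff (n+m) B) := by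
    field_simp
  rw [main, key, Finset.mul_sum]
  refine Finset.sum_congr rfl fun k hk => ?_
  rw [Finset.mul_sum, Finset.mul_sum]
  refine Finset.sum_congr rfl fun l hl => ?_
  have hln : l ≤ n := Nat.lt_succ_iff.mp (Finset.mem_range.mp hl)
  rw [hBel l]
  rw [degFubiniOrd]
  have hGid : ((1 - PowerSeries.C (-lam * x) * (degExpP lam 1 - 1))⁻¹) ^ k
      = (Gser lam x)^k := by rw [Gser, Hser]
  rw [hGid]
  have hchoose : ((n.choose l : ℝ)) * l.factorial * (n-l).factorial = n.factorial := by
    exact_mod_cast congrArg (Nat.cast : ℕ → ℝ)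
      (Nat.choose_mul_factorial_mul_factorial hln)
  linear_combination (- degFall lam 1 k * S m k * x^k
    * PowerSeries.coeff (n-l) ((Gser lam x)^k * degExpP lam ((k:ℝ) - m*lam))
    * PowerSeries.coeff l B) * hchoose
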